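/- Let r > 0, R ∈ ℕ, and suppose for all (Z,X) in a given set B and all k ∈ {0,…,R} the quantities satisfy e^{-R/4} < |X₀+X| < 2e^{-R/4} and (5/8)e^{-R/2} < |W| < 3e^{-R/2}, where W = Z₀+Z+(1/2)[X₀,X]. Define h(k) = r·e^{-k}/((e^{-k} + (1/4)|X₀+X|²)² + |W|²). Then for all k ∈ {0,…,R}: h(k) > r/13, and h(k) ≤ r/(e^{-k} + (1/2)e^{-R/2} + (25/64)e^{k-R}). -/
import Mathlib


set_option maxHeartbeats 1600000 in
theorem stmt_3 (r : ℝ) (hr : 0 < r) (R : ℕ) (a b : ℝ)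
    (ha1 : Real.exp (-(R : ℝ) / 4) < a) (ha2 : a < 2 * Real.exp (-(R : ℝ) / 4))
    (hb1 : (5 / 8) * Real.exp (-(R : ℝ) / 2) < b) (hb2 : b < 3 * Real.exp (-(R : ℝ) / 2))
    (k : ℕ) (hk : k ≤ R) :
    r * Real.exp (-(k : ℝ)) /
        ((Real.exp (-(k : ℝ)) + (1 / 4) * a ^ 2) ^ 2 + b ^ 2) > r / 13 ∧
    r * Real.exp (-(k : ℝ)) /
        ((Real.exp (-(k : ℝ)) + (1 / 4) * a ^ 2) ^ 2 + b ^ 2) ≤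
      r / (Real.exp (-(k : ℝ)) + (1 / 2) * Real.exp (-(R : ℝ) / 2) +
        (25 / 64) * Real.exp ((k : ℝ) - (R : ℝ))) := by
  set E := Real.exp (-(k : ℝ)) with hEdef
  set S := Real.exp (-(R : ℝ) / 2) with hSdef
  have hE : 0 < E := Real.exp_pos _
  have hS : 0 < S := Real.exp_pos _
  have ha0 : 0 < a := lt_trans (Real.exp_pos _) ha1
  have hb0 : 0 < b := lt_trans (by positivity) hb1
  have ha4 : Real.exp (-(R : ℝ) / 4) ^ 2 = S := by
    rw [sq, ← Real.exp_add, hSdef]; congr 1; ring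
  have haU : a ^ 2 < 4 * S := by nlinarith [Real.exp_pos (-(R : ℝ) / 4)]
  have haL : S < a ^ 2 := by nlinarith [Real.exp_pos (-(R : ℝ) / 4)]
  have hbU : b ^ 2 < 9 * (S * S) := by nlinarith
  have hbL : (25 / 64) * (S * S) < b ^ 2 := by nlinarith
  have hE1 : E ≤ 1 := by
    rw [hEdef, Real.exp_le_one_iff]
    simp
  have hS1 : S ≤ 1 := by
    rw [hSdef, Real.exp_le_one_iff]
    have : (0:ℝ) ≤ (R:ℝ) := Nat.cast_nonneg R
    linarith
  have hSSE : S * S ≤ E := by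
    rw [hSdef, hEdef, ← Real.exp_add]
    apply Real.exp_le_exp.2
    have : (k:ℝ) ≤ (R:ℝ) := Nat.cast_le.2 hk
    linarith
  have hESS : E * Real.exp ((k : ℝ) - (R : ℝ)) = S * S := by
    rw [hEdef, hSdef, ← Real.exp_add, ← Real.exp_add]
    ring_nf
  have hD : 0 < (E + (1 / 4) * a ^ 2) ^ 2 + b ^ 2 := by positivity
  set X := Real.exp ((k : ℝ) - (R : ℝ)) with hXdef
  have hX : 0 < X := Real.exp_pos _
  clear_value E S X
  have key1 : (E + (1 / 4) * a ^ 2) ^ 2 + b ^ 2 < 13 * E := by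
    nlinarith [mul_pos hE hS, mul_le_of_le_one_right hE.le hS1,
      mul_le_of_le_one_right hE.le hE1, mul_lt_mul_of_pos_left haU hE,
      sq_nonneg a, sq_nonneg (a ^ 2 - 4 * S)]
  have hden : 0 < E + (1 / 2) * S + (25 / 64) * X := by positivity
  have key2 : E * (E + (1 / 2) * S + (25 / 64) * X) ≤
      (E + (1 / 4) * a ^ 2) ^ 2 + b ^ 2 := by
    nlinarith [mul_lt_mul_of_pos_left haL hE, sq_nonneg (a ^ 2)]
  constructor
  · rw [gt_iff_lt, div_lt_div_iff₀ (by norm_num) hD]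
    have h := mul_lt_mul_of_pos_left key1 hr
    ring_nf at h ⊢
    linarith
  · rw [div_le_div_iff₀ hD hden]
    nlinarith [mul_le_mul_of_nonneg_left key2 hr.le]
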